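/- Let G be a (2P_2, \overline{P_2+P_3})-free, C_5-free atom containing an induced 4-cycle on vertices v_1,…,v_4. Then for every i ∈ {1,…,4} (indices modulo 4), every vertex of V_{{i}} is adjacent to every vertex of V_{{1,2,3,4}}, and at most one vertex of V_{{i,i+2}} has a neighbour in V_{{i}}. -/

import Mathlib

open SimpleGraph

/-- The graph `2P₂`: two disjoint edges, on vertex set `Fin 4`. -/
def twoP2 : SimpleGraph (Fin 4) :=
  SimpleGraph.fromRel (fun a b => (a = 0 ∧ b = 1) ∨ (a = 2 ∧ b = 3))

/-- The graph `P₂ + P₃`: disjoint union of a path on 2 vertices (0-1)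
and a path on 3 vertices (2-3-4), on vertex set `Fin 5`. -/
def P2P3 : SimpleGraph (Fin 5) :=
  SimpleGraph.fromRel (fun a b => (a = 0 ∧ b = 1) ∨ (a = 2 ∧ b = 3) ∨ (a = 3 ∧ b = 4))

/-- `G` is `H`-free: `G` contains no induced subgraph isomorphic to `H`. -/
def Free {W V : Type*} (H : SimpleGraph W) (G : SimpleGraph V) : Prop :=
  IsEmpty (H ↪g G)

/-- `G` has no clique cut-set: for every clique `K`, deleting the vertices of `K`
does not disconnect the graph.  A graph with this property is called an atom. -/
def NoCliqueCutset {V : Type*} (G : SimpleGraph V) : Prop :=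
  ∀ K : Set V, G.IsClique K → (G.induce (Kᶜ : Set V)).Preconnected

/-- The 5-cycle `C₅` on vertex set `Fin 5`. -/
def C5 : SimpleGraph (Fin 5) :=
  SimpleGraph.fromRel (fun a b => b = a + 1)

/-- For `S ⊆ Fin 4`, the set of vertices `x` outside the cycle `v 0, …, v 3` whose
neighbourhood on the cycle is exactly `{v i : i ∈ S}`. -/
def vSet {V : Type*} (G : SimpleGraph V) (v : Fin 4 → V) (S : Set (Fin 4)) : Set V :=
  {x | (∀ i, x ≠ v i) ∧ ∀ i, (G.Adj x (v i) ↔ i ∈ S)}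

private lemma no2P2 {V : Type*} {G : SimpleGraph V} (hf : _root_.Free twoP2 G)
    {a b c d : V} (hab : G.Adj a b) (hcd : G.Adj c d)
    (hac : ¬G.Adj a c) (had : ¬G.Adj a d) (hbc : ¬G.Adj b c) (hbd : ¬G.Adj b d)
    (nac : a ≠ c) (nad : a ≠ d) (nbc : b ≠ c) (nbd : b ≠ d) : False := by
  have nab := hab.ne
  have ncd := hcd.ne
  refine hf.false ⟨⟨![a,b,c,d], ?_⟩, ?_⟩
  · intro i j h
    fin_cases i <;> fin_cases j <;> simp_all
  · intro i j
    show G.Adj (![a,b,c,d] i) (![a,b,c,d] j) ↔ _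
    fin_cases i <;> fin_cases j <;>
      simp_all [twoP2, SimpleGraph.fromRel, G.adj_comm, Fin.isValue]

lemma noC5 {V : Type*} {G : SimpleGraph V} (hf : _root_.Free C5 G)
    {a b c d e : V} (hab : G.Adj a b) (hbc : G.Adj b c) (hcd : G.Adj c d)
    (hde : G.Adj d e) (hea : G.Adj e a)
    (hac : ¬G.Adj a c) (had : ¬G.Adj a d) (hbd : ¬G.Adj b d)
    (hbe : ¬G.Adj b e) (hce : ¬G.Adj c e)
    (nac : a ≠ c) (nad : a ≠ d) (nbd : b ≠ d) (nbe : b ≠ e) (nce : c ≠ e) : False := by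
  have nab := hab.ne; have nbc := hbc.ne; have ncd := hcd.ne
  have nde := hde.ne; have nea := hea.ne
  have h1 := hab.symm; have h2 := hbc.symm; have h3 := hcd.symm
  have h4 := hde.symm; have h5 := hea.symm
  have h6 : ¬G.Adj c a := fun h => hac h.symm
  have h7 : ¬G.Adj d a := fun h => had h.symm
  have h8 : ¬G.Adj d b := fun h => hbd h.symm
  have h9 : ¬G.Adj e b := fun h => hbe h.symm
  have h10 : ¬G.Adj e c := fun h => hce h.symm
  refine hf.false ⟨⟨![a,b,c,d,e], ?_⟩, ?_⟩
  · intro i j h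
    fin_cases i <;> fin_cases j <;> simp_all
  · intro i j
    show G.Adj (![a,b,c,d,e] i) (![a,b,c,d,e] j) ↔ _
    fin_cases i <;> fin_cases j <;>
      simp_all [C5, SimpleGraph.fromRel, Fin.isValue]

lemma noCoP2P3 {V : Type*} {G : SimpleGraph V} (hf : _root_.Free (P2P3ᶜ) G)
    {a b c d e : V}
    (hac : G.Adj a c) (had : G.Adj a d) (hae : G.Adj a e)
    (hbc : G.Adj b c) (hbd : G.Adj b d) (hbe : G.Adj b e) (hce : G.Adj c e)
    (hab : ¬G.Adj a b) (hcd : ¬G.Adj c d) (hde : ¬G.Adj d e)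
    (nab : a ≠ b) (ncd : c ≠ d) (nde : d ≠ e) : False := by
  have nac := hac.ne; have nad := had.ne; have nae := hae.ne
  have nbc := hbc.ne; have nbd := hbd.ne; have nbe := hbe.ne; have nce := hce.ne
  have h1 := hac.symm; have h2 := had.symm; have h3 := hae.symm
  have h4 := hbc.symm; have h5 := hbd.symm; have h6 := hbe.symm; have h7 := hce.symm
  have h8 : ¬G.Adj b a := fun h => hab h.symm
  have h9 : ¬G.Adj d c := fun h => hcd h.symm
  have h10 : ¬G.Adj e d := fun h => hde h.symm
  refine hf.false ⟨⟨![a,b,c,d,e], ?_⟩, ?_⟩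
  · intro i j h
    fin_cases i <;> fin_cases j <;> simp_all
  · intro i j
    show G.Adj (![a,b,c,d,e] i) (![a,b,c,d,e] j) ↔ _
    fin_cases i <;> fin_cases j <;>
      simp_all [P2P3, SimpleGraph.fromRel, compl_adj, Fin.isValue]

lemma lemB {V : Type*} {G : SimpleGraph V}
    (hf1 : _root_.Free twoP2 G) (hf2 : _root_.Free (P2P3ᶜ) G) (hf3 : _root_.Free C5 G)
    {a b c d x y p : V}
    (hab : G.Adj a b)
    (hac : ¬G.Adj a c)
    (had : G.Adj a d)
    (hax : G.Adj a x)
    (hay : G.Adj a y)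
    (hap : ¬G.Adj a p)
    (hbc : G.Adj b c)
    (hbd : ¬G.Adj b d)
    (hbx : ¬G.Adj b x)
    (hby : G.Adj b y)
    (hcd : G.Adj c d)
    (hcx : ¬G.Adj c x)
    (hcy : G.Adj c y)
    (hdx : ¬G.Adj d x)
    (hdy : G.Adj d y)
    (hxy : ¬G.Adj x y)
    (hxp : G.Adj x p)
    (nac : a ≠ c)
    (nap : a ≠ p)
    (nbd : b ≠ d) : False := by
  by_cases hbp_ : G.Adj b p
  · -- true
    by_cases hyp_ : G.Adj y p
    · -- true
      exact noCoP2P3 hf2 hab hax hay hbp_.symm hxp.symm hyp_.symm hby hap hbx hxy nap (show b ≠ x from fun hh => (fun hh2 => hcx hh2.symm) (hh ▸ hbc)) (show y ≠ x from fun hh => (fun hh2 => hbx hh2.symm) (hh ▸ hby.symm)).symm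
    by_cases hcp_ : G.Adj c p
    · -- true
      exact noC5 hf3 hax hxp hcp_.symm hcy hay.symm hap hac (fun hh => hcx hh.symm) hxy (fun hh => hyp_ hh.symm) nap nac (show x ≠ c from fun hh => (fun hh2 => hac hh2.symm) (hh ▸ hax.symm)) (show y ≠ x from fun hh => (fun hh2 => hbx hh2.symm) (hh ▸ hby.symm)).symm (show y ≠ p from fun hh => (fun hh2 => hap hh2.symm) (hh ▸ hay.symm)).symm
    exact no2P2 hf1 hcy hxp hcx hcp_ (fun hh => hxy hh.symm) hyp_ (show x ≠ c from fun hh => (fun hh2 => hac hh2.symm) (hh ▸ hax.symm)).symm (show p ≠ c from fun hh => hcx (hh ▸ hxp.symm)).symm (show y ≠ x from fun hh => (fun hh2 => hbx hh2.symm) (hh ▸ hby.symm)) (show y ≠ p from fun hh => (fun hh2 => hap hh2.symm) (hh ▸ hay.symm))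
  by_cases hcp_ : G.Adj c p
  · -- true
    exact noC5 hf3 hab hbc hcp_ hxp.symm hax.symm hac hap hbp_ hbx hcx nac nap (show b ≠ p from fun hh => (fun hh2 => hap hh2.symm) (hh ▸ hab.symm)) (show b ≠ x from fun hh => (fun hh2 => hcx hh2.symm) (hh ▸ hbc)) (show x ≠ c from fun hh => (fun hh2 => hac hh2.symm) (hh ▸ hax.symm)).symm
  exact no2P2 hf1 hbc hxp hbx hbp_ hcx hcp_ (show b ≠ x from fun hh => (fun hh2 => hcx hh2.symm) (hh ▸ hbc)) (show b ≠ p from fun hh => (fun hh2 => hap hh2.symm) (hh ▸ hab.symm)) (show x ≠ c from fun hh => (fun hh2 => hac hh2.symm) (hh ▸ hax.symm)).symm (show c ≠ p from fun hh => (fun hh2 => hbp_ hh2.symm) (hh ▸ hbc.symm))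

lemma lemA {V : Type*} {G : SimpleGraph V}
    (hf1 : _root_.Free twoP2 G) (hf2 : _root_.Free (P2P3ᶜ) G) (hf3 : _root_.Free C5 G)
    {a b c d x y p q : V}
    (hab : G.Adj a b)
    (hac : ¬G.Adj a c)
    (had : G.Adj a d)
    (hax : G.Adj a x)
    (hay : G.Adj a y)
    (hap : G.Adj a p)
    (haq : G.Adj a q)
    (hbc : G.Adj b c)
    (hbd : ¬G.Adj b d)
    (hbx : ¬G.Adj b x)
    (hby : G.Adj b y)
    (hcd : G.Adj c d)
    (hcx : ¬G.Adj c x)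
    (hcy : G.Adj c y)
    (hdx : ¬G.Adj d x)
    (hdy : G.Adj d y)
    (hxy : ¬G.Adj x y)
    (hxp : G.Adj x p)
    (hxq : G.Adj x q)
    (hpq : ¬G.Adj p q)
    (nac : a ≠ c)
    (nbd : b ≠ d)
    (npq : p ≠ q) : False := by
  by_cases hbp_ : G.Adj b p
  · -- true
    by_cases hbq_ : G.Adj b q
    · -- true
      by_cases hcp_ : G.Adj c p
      · -- true
        by_cases hdp_ : G.Adj d p
        · -- true
          by_cases hcq_ : G.Adj c q
          · -- true
            exact noCoP2P3 hf2 hap.symm hcp_.symm hxp.symm haq.symm hcq_.symm hxq.symm hax hpq hac hcx npq nac (show x ≠ c from fun hh => (fun hh2 => hac hh2.symm) (hh ▸ hax.symm)).symm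
          by_cases hdq_ : G.Adj d q
          · -- true
            exact noCoP2P3 hf2 hab.symm hbc hbq_ had.symm hcd.symm hdq_ haq hbd hac hcq_ nbd nac (show q ≠ c from fun hh => (fun hh2 => hac hh2.symm) (hh ▸ haq.symm)).symm
          exact no2P2 hf1 hcd hxq hcx hcq_ hdx hdq_ (show x ≠ c from fun hh => (fun hh2 => hac hh2.symm) (hh ▸ hax.symm)).symm (show q ≠ c from fun hh => (fun hh2 => hac hh2.symm) (hh ▸ haq.symm)).symm (show d ≠ x from fun hh => (fun hh2 => hcx hh2.symm) (hh ▸ hcd.symm)) (show q ≠ d from fun hh => (fun hh2 => hbd hh2.symm) (hh ▸ hbq_.symm)).symm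
        exact noCoP2P3 hf2 hab had hap hbc.symm hcd hcp_ hbp_ hac hbd hdp_ nac nbd (show p ≠ d from fun hh => (fun hh2 => hbd hh2.symm) (hh ▸ hbp_.symm)).symm
      by_cases hdp_ : G.Adj d p
      · -- true
        exact noCoP2P3 hf2 hab.symm hbc hbp_ had.symm hcd.symm hdp_ hap hbd hac hcp_ nbd nac (show p ≠ c from fun hh => (fun hh2 => hac hh2.symm) (hh ▸ hap.symm)).symm
      exact no2P2 hf1 hcd hxp hcx hcp_ hdx hdp_ (show x ≠ c from fun hh => (fun hh2 => hac hh2.symm) (hh ▸ hax.symm)).symm (show p ≠ c from fun hh => (fun hh2 => hac hh2.symm) (hh ▸ hap.symm)).symm (show d ≠ x from fun hh => (fun hh2 => hcx hh2.symm) (hh ▸ hcd.symm)) (show p ≠ d from fun hh => (fun hh2 => hbd hh2.symm) (hh ▸ hbp_.symm)).symm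
    by_cases hcq_ : G.Adj c q
    · -- true
      by_cases hyq_ : G.Adj y q
      · -- true
        by_cases hcp_ : G.Adj c p
        · -- true
          exact noCoP2P3 hf2 hab haq hap hbc.symm hcq_ hcp_ hbp_ hac hbq_ (fun hh => hpq hh.symm) nac (show q ≠ b from fun hh => hbx (hh ▸ hxq.symm)).symm npq.symm
        exact noC5 hf3 hbc hcq_ hxq.symm hxp hbp_.symm hbq_ hbx hcx hcp_ (fun hh => hpq hh.symm) (show q ≠ b from fun hh => hbx (hh ▸ hxq.symm)).symm (show b ≠ x from fun hh => (fun hh2 => hcx hh2.symm) (hh ▸ hbc)) (show x ≠ c from fun hh => (fun hh2 => hac hh2.symm) (hh ▸ hax.symm)).symm (show p ≠ c from fun hh => (fun hh2 => hac hh2.symm) (hh ▸ hap.symm)).symm npq.symm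
      exact no2P2 hf1 hby hxq hbx hbq_ (fun hh => hxy hh.symm) hyq_ (show b ≠ x from fun hh => (fun hh2 => hcx hh2.symm) (hh ▸ hbc)) (show q ≠ b from fun hh => hbx (hh ▸ hxq.symm)).symm (show y ≠ x from fun hh => (fun hh2 => hbx hh2.symm) (hh ▸ hby.symm)) (show y ≠ q from fun hh => (fun hh2 => hbq_ hh2.symm) (hh ▸ hby.symm))
    exact no2P2 hf1 hbc hxq hbx hbq_ hcx hcq_ (show b ≠ x from fun hh => (fun hh2 => hcx hh2.symm) (hh ▸ hbc)) (show b ≠ q from fun hh => (fun hh2 => hcq_ hh2.symm) (hh ▸ hbc)) (show x ≠ c from fun hh => (fun hh2 => hac hh2.symm) (hh ▸ hax.symm)).symm (show q ≠ c from fun hh => (fun hh2 => hac hh2.symm) (hh ▸ haq.symm)).symm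
  by_cases hcp_ : G.Adj c p
  · -- true
    by_cases hyp_ : G.Adj y p
    · -- true
      by_cases hdp_ : G.Adj d p
      · -- true
        exact noCoP2P3 hf2 had hab hap hcd hbc.symm hcp_ hdp_ hac (fun hh => hbd hh.symm) hbp_ nac nbd.symm (show p ≠ b from fun hh => hbd (hh ▸ hdp_.symm)).symm
      by_cases hcq_ : G.Adj c q
      · -- true
        exact noCoP2P3 hf2 hap.symm hcp_.symm hxp.symm haq.symm hcq_.symm hxq.symm hax hpq hac hcx npq nac (show x ≠ c from fun hh => (fun hh2 => hac hh2.symm) (hh ▸ hax.symm)).symm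
      by_cases hbq_ : G.Adj b q
      · -- true
        exact noC5 hf3 hbc hcp_ hxp.symm hxq hbq_.symm hbp_ hbx hcx hcq_ hpq (show p ≠ b from fun hh => hbx (hh ▸ hxp.symm)).symm (show b ≠ x from fun hh => (fun hh2 => hcx hh2.symm) (hh ▸ hbc)) (show x ≠ c from fun hh => (fun hh2 => hac hh2.symm) (hh ▸ hax.symm)).symm (show q ≠ c from fun hh => (fun hh2 => hac hh2.symm) (hh ▸ haq.symm)).symm npq
      exact no2P2 hf1 hbc hxq hbx hbq_ hcx hcq_ (show b ≠ x from fun hh => (fun hh2 => hcx hh2.symm) (hh ▸ hbc)) (show b ≠ q from fun hh => (fun hh2 => hcq_ hh2.symm) (hh ▸ hbc)) (show x ≠ c from fun hh => (fun hh2 => hac hh2.symm) (hh ▸ hax.symm)).symm (show q ≠ c from fun hh => (fun hh2 => hac hh2.symm) (hh ▸ haq.symm)).symm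
    exact no2P2 hf1 hby hxp hbx hbp_ (fun hh => hxy hh.symm) hyp_ (show b ≠ x from fun hh => (fun hh2 => hcx hh2.symm) (hh ▸ hbc)) (show p ≠ b from fun hh => hbx (hh ▸ hxp.symm)).symm (show y ≠ x from fun hh => (fun hh2 => hbx hh2.symm) (hh ▸ hby.symm)) (show y ≠ p from fun hh => (fun hh2 => hbp_ hh2.symm) (hh ▸ hby.symm))
  exact no2P2 hf1 hbc hxp hbx hbp_ hcx hcp_ (show b ≠ x from fun hh => (fun hh2 => hcx hh2.symm) (hh ▸ hbc)) (show b ≠ p from fun hh => (fun hh2 => hcp_ hh2.symm) (hh ▸ hbc)) (show x ≠ c from fun hh => (fun hh2 => hac hh2.symm) (hh ▸ hax.symm)).symm (show p ≠ c from fun hh => (fun hh2 => hac hh2.symm) (hh ▸ hap.symm)).symm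

lemma lemB2 {V : Type*} {G : SimpleGraph V}
    (hf1 : _root_.Free twoP2 G) (hf2 : _root_.Free (P2P3ᶜ) G) (hf3 : _root_.Free C5 G)
    {a b c d y z x w : V}
    (hab : G.Adj a b)
    (hac : ¬G.Adj a c)
    (had : G.Adj a d)
    (hay : G.Adj a y)
    (haz : G.Adj a z)
    (hax : G.Adj a x)
    (haw : G.Adj a w)
    (hbc : G.Adj b c)
    (hbd : ¬G.Adj b d)
    (hby : ¬G.Adj b y)
    (hbz : ¬G.Adj b z)
    (hbx : ¬G.Adj b x)
    (hbw : ¬G.Adj b w)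
    (hcd : G.Adj c d)
    (hcy : G.Adj c y)
    (hcz : G.Adj c z)
    (hcx : ¬G.Adj c x)
    (hcw : ¬G.Adj c w)
    (hdy : ¬G.Adj d y)
    (hdz : ¬G.Adj d z)
    (hdx : ¬G.Adj d x)
    (hdw : ¬G.Adj d w)
    (hyx : G.Adj y x)
    (hzw : G.Adj z w)
    (nac : a ≠ c)
    (nbd : b ≠ d)
    (nyz : y ≠ z)
    (nxw : x ≠ w) : False := by
  by_cases hxw_ : G.Adj x w
  · -- true
    exact no2P2 hf1 hbc hxw_ hbx hbw hcx hcw (show b ≠ x from fun hh => (fun hh2 => hcx hh2.symm) (hh ▸ hbc)) (show b ≠ w from fun hh => (fun hh2 => hcw hh2.symm) (hh ▸ hbc)) (show x ≠ c from fun hh => (fun hh2 => hac hh2.symm) (hh ▸ hax.symm)).symm (show w ≠ c from fun hh => (fun hh2 => hac hh2.symm) (hh ▸ haw.symm)).symm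
  by_cases hyz_ : G.Adj y z
  · -- true
    exact noCoP2P3 hf2 hay hab haz hcy hbc.symm hcz hyz_ hac (fun hh => hby hh.symm) hbz nac (show y ≠ b from fun hh => hbz (hh ▸ hyz_)) (show z ≠ b from fun hh => hby (hh ▸ hyz_.symm)).symm
  by_cases hzx_ : G.Adj z x
  · -- true
    exact noCoP2P3 hf2 hay.symm hcy.symm hyx haz.symm hcz.symm hzx_ hax hyz_ hac hcx nyz nac (show x ≠ c from fun hh => (fun hh2 => hac hh2.symm) (hh ▸ hax.symm)).symm
  by_cases hyw_ : G.Adj y w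
  · -- true
    exact noCoP2P3 hf2 hay.symm hcy.symm hyw_ haz.symm hcz.symm hzw haw hyz_ hac hcw nyz nac (show w ≠ c from fun hh => (fun hh2 => hac hh2.symm) (hh ▸ haw.symm)).symm
  exact no2P2 hf1 hyx hzw hyz_ hyw_ (fun hh => hzx_ hh.symm) hxw_ nyz (show y ≠ w from fun hh => (fun hh2 => hcw hh2.symm) (hh ▸ hcy.symm)) (show z ≠ x from fun hh => (fun hh2 => hcx hh2.symm) (hh ▸ hcz.symm)).symm nxw

lemma lemB1 {V : Type*} {G : SimpleGraph V}
    (hf1 : _root_.Free twoP2 G) (hf2 : _root_.Free (P2P3ᶜ) G) (hf3 : _root_.Free C5 G)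
    {a b c d y z x : V}
    (hab : G.Adj a b)
    (hac : ¬G.Adj a c)
    (had : G.Adj a d)
    (hay : G.Adj a y)
    (haz : G.Adj a z)
    (hax : G.Adj a x)
    (hbc : G.Adj b c)
    (hbd : ¬G.Adj b d)
    (hby : ¬G.Adj b y)
    (hbz : ¬G.Adj b z)
    (hbx : ¬G.Adj b x)
    (hcd : G.Adj c d)
    (hcy : G.Adj c y)
    (hcz : G.Adj c z)
    (hcx : ¬G.Adj c x)
    (hdy : ¬G.Adj d y)
    (hdz : ¬G.Adj d z)
    (hdx : ¬G.Adj d x)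
    (hyx : G.Adj y x)
    (hzx : G.Adj z x)
    (nac : a ≠ c)
    (nbd : b ≠ d)
    (nyz : y ≠ z) : False := by
  by_cases hyz_ : G.Adj y z
  · -- true
    exact noCoP2P3 hf2 hay hab haz hcy hbc.symm hcz hyz_ hac (fun hh => hby hh.symm) hbz nac (show y ≠ b from fun hh => hbz (hh ▸ hyz_)) (show z ≠ b from fun hh => hby (hh ▸ hyz_.symm)).symm
  exact noCoP2P3 hf2 hay.symm hcy.symm hyx haz.symm hcz.symm hzx hax hyz_ hac hcx nyz nac (show x ≠ c from fun hh => (fun hh2 => hac hh2.symm) (hh ▸ hax.symm)).symm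

theorem clm_C4_V1_complete_and_one_V13_nbr {V : Type*} [Fintype V] (G : SimpleGraph V)
    (hfree1 : _root_.Free twoP2 G) (hfree2 : _root_.Free (P2P3ᶜ) G) (hfree3 : _root_.Free C5 G)
    (hatom : NoCliqueCutset G)
    (v : Fin 4 → V) (hv : Function.Injective v)
    (hC : ∀ i j : Fin 4, G.Adj (v i) (v j) ↔ (j = i + 1 ∨ i = j + 1)) :
    ∀ i : Fin 4,
      (∀ x ∈ vSet G v {i}, ∀ y ∈ vSet G v (Set.univ : Set (Fin 4)), G.Adj x y) ∧
      (∀ y ∈ vSet G v {i, i + 2}, ∀ y' ∈ vSet G v {i, i + 2},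
        (∃ x ∈ vSet G v {i}, G.Adj y x) → (∃ x ∈ vSet G v {i}, G.Adj y' x) → y = y') := by
  intro i
  have e1 : ∀ j : Fin 4, j + 1 ≠ j := by decide
  have e2 : ∀ j : Fin 4, j + 2 ≠ j := by decide
  have e3 : ∀ j : Fin 4, j + 3 ≠ j := by decide
  have e4 : ∀ j : Fin 4, j + 2 ≠ j + 1 := by decide
  have e5 : ∀ j : Fin 4, j + 3 ≠ j + 1 := by decide
  have e6 : ∀ j : Fin 4, j + 3 ≠ j + 2 := by decide
  have e7 : ∀ j : Fin 4, j + 1 + 1 = j + 2 := by decide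
  have e8 : ∀ j : Fin 4, j + 2 + 1 = j + 3 := by decide
  have e9 : ∀ j : Fin 4, j = j + 3 + 1 := by decide
  have hab : G.Adj (v i) (v (i+1)) := (hC i (i+1)).mpr (Or.inl rfl)
  have hbc : G.Adj (v (i+1)) (v (i+2)) := (hC _ _).mpr (Or.inl (e7 i).symm)
  have hcd : G.Adj (v (i+2)) (v (i+3)) := (hC _ _).mpr (Or.inl (e8 i).symm)
  have had : G.Adj (v i) (v (i+3)) := (hC _ _).mpr (Or.inr (e9 i))
  have hac : ¬ G.Adj (v i) (v (i+2)) := by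
    rw [hC]
    rintro (h | h)
    · exact e4 i h
    · rw [e8 i] at h; exact e3 i h.symm
  have e10 : ∀ j : Fin 4, ¬(j + 3 = j + 1 + 1) := by decide
  have e11 : ∀ j : Fin 4, ¬(j + 1 = j + 3 + 1) := by decide
  have hbd : ¬ G.Adj (v (i+1)) (v (i+3)) := by
    rw [hC]
    rintro (h | h)
    · exact e10 i h
    · exact e11 i h
  have nac : v i ≠ v (i+2) := fun h => e2 i (hv h).symm
  have nbd : v (i+1) ≠ v (i+3) := fun h => e5 i (hv h).symm
  constructor
  · intro x hx y hy
    obtain ⟨hx1, hx2⟩ := hx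
    obtain ⟨hy1, hy2⟩ := hy
    have hxa : G.Adj x (v i) := (hx2 i).mpr rfl
    have hxv : ∀ j : Fin 4, j ≠ i → ¬ G.Adj x (v j) := fun j hj h => hj ((hx2 j).mp h)
    have hxb : ¬ G.Adj x (v (i+1)) := hxv _ (e1 i)
    have hxc : ¬ G.Adj x (v (i+2)) := hxv _ (e2 i)
    have hxd : ¬ G.Adj x (v (i+3)) := hxv _ (e3 i)
    have hya : G.Adj y (v i) := (hy2 i).mpr trivial
    have hyb : G.Adj y (v (i+1)) := (hy2 _).mpr trivial
    have hyc : G.Adj y (v (i+2)) := (hy2 _).mpr trivial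
    have hyd : G.Adj y (v (i+3)) := (hy2 _).mpr trivial
    by_contra hxy
    -- every neighbour of x distinct from v i is adjacent to v i
    have adj_a : ∀ r : V, G.Adj x r → r ≠ v i → G.Adj (v i) r := by
      intro r hr hne
      by_contra har
      exact lemB hfree1 hfree2 hfree3 hab hac had hxa.symm hya.symm har hbc hbd
        (fun h => hxb h.symm) hyb.symm hcd (fun h => hxc h.symm) hyc.symm
        (fun h => hxd h.symm) hyd.symm hxy hr nac hne.symm nbd
    have hK : G.IsClique {z | G.Adj x z} := by
      intro p hp q hq hpq
      by_contra hnpq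
      have hp' : G.Adj x p := hp
      have hq' : G.Adj x q := hq
      by_cases hpa : p = v i
      · have hqa : q ≠ v i := fun h => hpq (hpa.trans h.symm)
        exact hnpq (by rw [hpa]; exact adj_a q hq' hqa)
      · by_cases hqa : q = v i
        · exact hnpq (by rw [hqa]; exact (adj_a p hp' hpa).symm)
        · exact lemA hfree1 hfree2 hfree3 hab hac had hxa.symm hya.symm
            (adj_a p hp' hpa) (adj_a q hq' hqa) hbc hbd (fun h => hxb h.symm)
            hyb.symm hcd (fun h => hxc h.symm) hyc.symm (fun h => hxd h.symm)
            hyd.symm hxy hp' hq' hnpq nac nbd hpq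
    have hpre := hatom _ hK
    have hxmem : x ∈ ({z | G.Adj x z}ᶜ : Set V) := fun h => G.loopless.irrefl x h
    have hymem : y ∈ ({z | G.Adj x z}ᶜ : Set V) := hxy
    have hxyne : x ≠ y := fun h => hxb (h.symm ▸ hyb)
    obtain ⟨w⟩ := hpre ⟨x, hxmem⟩ ⟨y, hymem⟩
    have hnil : ¬ w.Nil := SimpleGraph.Walk.not_nil_of_ne (by simpa using hxyne)
    have hadj := w.adj_snd hnil
    exact (w.getVert 1).2 hadj
  · intro y hy y' hy' h1 h2
    by_contra hne
    obtain ⟨hy1, hy2⟩ := hy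
    obtain ⟨hy1', hy2'⟩ := hy'
    obtain ⟨x, hx, hyx⟩ := h1
    obtain ⟨x', hx', hy'x'⟩ := h2
    obtain ⟨hx1, hx2⟩ := hx
    obtain ⟨hx1', hx2'⟩ := hx'
    have hmem : ∀ j : Fin 4, j ∈ ({i, i+2} : Set (Fin 4)) ↔ (j = i ∨ j = i + 2) := by
      intro j; simp [Set.mem_insert_iff]
    have hya : G.Adj y (v i) := (hy2 i).mpr ((hmem i).mpr (Or.inl rfl))
    have hyc : G.Adj y (v (i+2)) := (hy2 _).mpr ((hmem _).mpr (Or.inr rfl))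
    have hyb : ¬ G.Adj y (v (i+1)) := fun h => ((hmem _).mp ((hy2 _).mp h)).elim (e1 i) (e4 i).symm
    have hyd : ¬ G.Adj y (v (i+3)) := fun h => ((hmem _).mp ((hy2 _).mp h)).elim (e3 i) (e6 i)
    have hya' : G.Adj y' (v i) := (hy2' i).mpr ((hmem i).mpr (Or.inl rfl))
    have hyc' : G.Adj y' (v (i+2)) := (hy2' _).mpr ((hmem _).mpr (Or.inr rfl))
    have hyb' : ¬ G.Adj y' (v (i+1)) := fun h => ((hmem _).mp ((hy2' _).mp h)).elim (e1 i) (e4 i).symm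
    have hyd' : ¬ G.Adj y' (v (i+3)) := fun h => ((hmem _).mp ((hy2' _).mp h)).elim (e3 i) (e6 i)
    have hxa : G.Adj x (v i) := (hx2 i).mpr rfl
    have hxv : ∀ j : Fin 4, j ≠ i → ¬ G.Adj x (v j) := fun j hj h => hj ((hx2 j).mp h)
    have hxa' : G.Adj x' (v i) := (hx2' i).mpr rfl
    have hxv' : ∀ j : Fin 4, j ≠ i → ¬ G.Adj x' (v j) := fun j hj h => hj ((hx2' j).mp h)
    by_cases hxx : x = x'
    · subst hxx
      exact lemB1 hfree1 hfree2 hfree3 hab hac had hya.symm hya'.symm hxa.symm hbc hbd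
        (fun h => hyb h.symm) (fun h => hyb' h.symm) (fun h => hxv _ (e1 i) h.symm)
        hcd hyc.symm hyc'.symm (fun h => hxv _ (e2 i) h.symm)
        (fun h => hyd h.symm) (fun h => hyd' h.symm) (fun h => hxv _ (e3 i) h.symm)
        hyx hy'x' nac nbd hne
    · exact lemB2 hfree1 hfree2 hfree3 hab hac had hya.symm hya'.symm hxa.symm hxa'.symm
        hbc hbd (fun h => hyb h.symm) (fun h => hyb' h.symm)
        (fun h => hxv _ (e1 i) h.symm) (fun h => hxv' _ (e1 i) h.symm)
        hcd hyc.symm hyc'.symm (fun h => hxv _ (e2 i) h.symm) (fun h => hxv' _ (e2 i) h.symm)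
        (fun h => hyd h.symm) (fun h => hyd' h.symm)
        (fun h => hxv _ (e3 i) h.symm) (fun h => hxv' _ (e3 i) h.symm)
        hyx hy'x' nac nbd hne hxx
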